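/- Let Σ₂ = {a, b} with a, b even positive integers, and let w be a two-times differentiable infinite word over Σ₂ (Δ(w) and Δ²(w) are infinite words over Σ₂). Then the frequency of each letter in w exists and equals 1/2, i.e. lim_{k→∞} |Pref_k(w)|_a / k = 1/2. -/

import Mathlib

/-- Partial sums of a sequence of run lengths. -/
def partialSum (t : ℕ → ℕ) : ℕ → ℕ
  | 0 => 0
  | k + 1 => partialSum t k + t k

/-- `w` decomposes into maximal runs with base sequence `α` and run-length
sequence `t`. -/
def IsRunDecomp (w α t : ℕ → ℕ) : Prop :=
  (∀ k, 1 ≤ t k) ∧ (∀ k, α k ≠ α (k + 1)) ∧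
    ∀ k i, partialSum t k ≤ i → i < partialSum t (k + 1) → w i = α k

/-- `t` is the run-length sequence Δ(w) of the infinite word `w`. -/
def IsDelta (w t : ℕ → ℕ) : Prop := ∃ α, IsRunDecomp w α t

/-- The prefix of length `k` of an infinite word. -/
def pref (w : ℕ → ℕ) (k : ℕ) : List ℕ := (List.range k).map w

lemma partialSum_succ (t : ℕ → ℕ) (k : ℕ) :
    partialSum t (k + 1) = partialSum t k + t k := rfl

lemma exists_bracket (t : ℕ → ℕ) (ht : ∀ k, 1 ≤ t k) (n : ℕ) :
    ∃ m, partialSum t m ≤ n ∧ n < partialSum t (m + 1) := by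
  induction n with
  | zero =>
    refine ⟨0, le_refl _, ?_⟩
    have := ht 0
    simp only [partialSum]
    omega
  | succ n ih =>
    obtain ⟨m, h1, h2⟩ := ih
    by_cases h : n + 1 < partialSum t (m + 1)
    · exact ⟨m, by omega, h⟩
    · refine ⟨m + 1, by omega, ?_⟩
      have := ht (m + 1)
      rw [partialSum_succ t (m + 1)]
      omega

/-- Alternating sum of a once-more differentiable word with even letters is bounded. -/
lemma alt_sum_bound (d1 d2 : ℕ → ℕ) (M : ℕ)
    (h2 : IsDelta d1 d2)
    (heven : ∀ i, Even (d2 i)) (hle : ∀ i, d1 i ≤ M) :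
    ∀ m, |∑ k ∈ Finset.range m, (-1 : ℤ) ^ k * d1 k| ≤ M := by
  obtain ⟨β, hβ1, hβ2, hβ3⟩ := h2
  have hQeven : ∀ j, Even (partialSum d2 j) := by
    intro j
    induction j with
    | zero => simp [partialSum]
    | succ j ih => rw [partialSum_succ]; exact ih.add (heven j)
  -- value on each block
  have hblock : ∀ j r, r ≤ d2 j →
      ∑ k ∈ Finset.range r, (-1 : ℤ) ^ (partialSum d2 j + k) * d1 (partialSum d2 j + k)
        = (if Even r then 0 else 1) * (β j : ℤ) := by
    intro j r hr
    have : ∀ k ∈ Finset.range r,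
        (-1 : ℤ) ^ (partialSum d2 j + k) * d1 (partialSum d2 j + k)
          = (-1 : ℤ) ^ k * (β j : ℤ) := by
      intro k hk
      simp only [Finset.mem_range] at hk
      have hd : d1 (partialSum d2 j + k) = β j := by
        apply hβ3 j
        · omega
        · rw [partialSum_succ]; omega
      rw [hd, pow_add, (hQeven j).neg_one_pow, one_mul]
    rw [Finset.sum_congr rfl this, ← Finset.sum_mul, neg_one_geom_sum]
  have hbd : ∀ j, ∑ k ∈ Finset.range (partialSum d2 j), (-1 : ℤ) ^ k * d1 k = 0 := by
    intro j
    induction j with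
    | zero => simp [partialSum]
    | succ j ih =>
      rw [partialSum_succ, Finset.sum_range_add, ih, hblock j (d2 j) le_rfl,
        if_pos (heven j), zero_mul, add_zero]
  intro m
  obtain ⟨j, hj1, hj2⟩ := exists_bracket d2 hβ1 m
  have hm : m = partialSum d2 j + (m - partialSum d2 j) := by omega
  rw [hm, Finset.sum_range_add, hbd j, zero_add,
    hblock j (m - partialSum d2 j) (by rw [partialSum_succ] at hj2; omega)]
  have hβle : (β j : ℤ) ≤ M := by
    have hd : d1 (partialSum d2 j) = β j := by
      apply hβ3 j _ le_rfl
      rw [partialSum_succ]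
      have := hβ1 j
      omega
    exact_mod_cast hd ▸ hle (partialSum d2 j)
  split
  · simp
  · rw [one_mul, abs_of_nonneg (by positivity)]
    exact hβle

/-- From bounded discrepancy to frequency 1/2. -/
lemma tendsto_half (c : ℕ → ℕ) (C : ℝ) (hC : ∀ n : ℕ, |2 * (c n : ℝ) - n| ≤ C) :
    Filter.Tendsto (fun k => ((c k : ℝ)) / k) Filter.atTop (nhds (1 / 2)) := by
  have hC0 : 0 ≤ C := le_trans (abs_nonneg _) (hC 0)
  have h0 : Filter.Tendsto (fun k : ℕ => (c k : ℝ) / k - 1 / 2) Filter.atTop (nhds 0) := by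
    apply squeeze_zero_norm' (a := fun k : ℕ => C / k)
      ?_ (tendsto_const_div_atTop_nhds_zero_nat C)
    filter_upwards [Filter.eventually_ge_atTop 1] with k hk
    have hk' : (0 : ℝ) < k := by exact_mod_cast hk
    have heq : (c k : ℝ) / k - 1 / 2 = (2 * (c k : ℝ) - k) / (2 * k) := by
      field_simp
    have habs2 : |2 * (k : ℝ)| = 2 * k := abs_of_pos (by linarith)
    rw [Real.norm_eq_abs, heq, abs_div, habs2]
    have h1 : |2 * (c k : ℝ) - k| / (2 * k) ≤ C / (2 * k) := by gcongr; exact hC k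
    have h2 : C / (2 * k) ≤ C / k := div_le_div_of_nonneg_left hC0 hk' (by linarith)
    linarith
  have := h0.add_const (1 / 2)
  simpa using this

theorem stmt15 (a b : ℕ) (ha : Even a) (hb : Even b)
    (hapos : 0 < a) (hbpos : 0 < b) (hab : a ≠ b)
    (w : ℕ → ℕ) (hw : ∀ i, w i = a ∨ w i = b)
    (d1 d2 : ℕ → ℕ) (h1 : IsDelta w d1) (hd1 : ∀ i, d1 i = a ∨ d1 i = b)
    (h2 : IsDelta d1 d2) (hd2 : ∀ i, d2 i = a ∨ d2 i = b) :
    Filter.Tendsto (fun k => ((pref w k).count a : ℝ) / k)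
      Filter.atTop (nhds (1 / 2)) ∧
    Filter.Tendsto (fun k => ((pref w k).count b : ℝ) / k)
      Filter.atTop (nhds (1 / 2)) := by
  obtain ⟨α, hα1, hα2, hα3⟩ := h1
  set M : ℕ := max a b with hM
  set ε : ℕ → ℤ := fun x => if x = a then (1 : ℤ) else -1 with hε
  -- the letters of α
  have hαab : ∀ k, α k = a ∨ α k = b := by
    intro k
    have h := hα3 k (partialSum d1 k) le_rfl
      (by rw [partialSum_succ]; have := hα1 k; omega)
    rw [← h]; exact hw _
  have hεflip : ∀ k, ε (α (k + 1)) = -ε (α k) := by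
    intro k
    rcases hαab k with h | h <;> rcases hαab (k + 1) with h' | h' <;>
      simp only [hε, h, h', if_pos rfl] <;>
      first
      | (exact absurd (h.trans h'.symm) (hα2 k))
      | (simp [hab, Ne.symm hab])
  have hεpow : ∀ k, ε (α k) = (-1) ^ k * ε (α 0) := by
    intro k
    induction k with
    | zero => simp
    | succ k ih => rw [hεflip, ih, pow_succ]; ring
  have hεabs : ∀ x, |ε x| = 1 := by
    intro x; simp only [hε]; split <;> simp
  -- sum of ε over prefixes at run boundaries
  have hSP : ∀ m, ∑ i ∈ Finset.range (partialSum d1 m), ε (w i)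
      = ε (α 0) * ∑ k ∈ Finset.range m, (-1 : ℤ) ^ k * d1 k := by
    intro m
    induction m with
    | zero => simp [partialSum]
    | succ m ih =>
      rw [partialSum_succ, Finset.sum_range_add, ih, Finset.sum_range_succ]
      have hin : ∀ i ∈ Finset.range (d1 m), ε (w (partialSum d1 m + i)) = ε (α m) := by
        intro i hi
        simp only [Finset.mem_range] at hi
        congr 1
        apply hα3 m _ (by omega)
        rw [partialSum_succ]; omega
      rw [Finset.sum_congr rfl hin, Finset.sum_const, Finset.card_range, hεpow m]
      push_cast
      ring
  -- the total bound on the ε-sum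
  have hT : ∀ m, |∑ k ∈ Finset.range m, (-1 : ℤ) ^ k * d1 k| ≤ M := by
    apply alt_sum_bound d1 d2 M h2
    · intro i; rcases hd2 i with h | h <;> rw [h] <;> assumption
    · intro i; rcases hd1 i with h | h <;> rw [h] <;> [exact le_max_left a b; exact le_max_right a b]
  have hS : ∀ n, |∑ i ∈ Finset.range n, ε (w i)| ≤ 2 * M := by
    intro n
    obtain ⟨m, hm1, hm2⟩ := exists_bracket d1 hα1 n
    have hn : n = partialSum d1 m + (n - partialSum d1 m) := by omega
    rw [hn, Finset.sum_range_add, hSP]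
    have hin : ∀ i ∈ Finset.range (n - partialSum d1 m),
        ε (w (partialSum d1 m + i)) = ε (α m) := by
      intro i hi
      simp only [Finset.mem_range] at hi
      congr 1
      exact hα3 m _ (by omega) (by omega)
    rw [Finset.sum_congr rfl hin, Finset.sum_const, Finset.card_range]
    have h1 : |ε (α 0) * ∑ k ∈ Finset.range m, (-1 : ℤ) ^ k * d1 k| ≤ M := by
      rw [abs_mul, hεabs, one_mul]; exact hT m
    have h2' : |((n - partialSum d1 m : ℕ) : ℤ) • ε (α m)| ≤ M := by
      rw [zsmul_eq_mul, abs_mul, hεabs, mul_one, abs_of_nonneg (by positivity)]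
      rw [partialSum_succ] at hm2
      have : n - partialSum d1 m ≤ d1 m := by omega
      have hle : d1 m ≤ M := by
        rcases hd1 m with h | h <;> rw [h] <;> [exact le_max_left a b; exact le_max_right a b]
      exact Nat.cast_le.mpr (le_trans this hle)
    calc |_ + _| ≤ _ + _ := abs_add_le _ _
      _ ≤ (M : ℤ) + M := add_le_add h1 h2'
      _ = 2 * M := by ring
  -- relating counts to ε-sums
  have hca : ∀ n, 2 * ((pref w n).count a : ℤ) = n + ∑ i ∈ Finset.range n, ε (w i) := by
    intro n
    induction n with
    | zero => simp [pref]
    | succ n ih =>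
      have hp : pref w (n + 1) = pref w n ++ [w n] := by
        simp [pref, List.range_succ]
      rw [hp, List.count_append, Finset.sum_range_succ]
      have e1 : ε (w n) = if w n = a then 1 else -1 := by simp only [hε]
      rcases hw n with h | h
      · have e2 : List.count a [w n] = 1 := by simp [List.count_cons, h]
        rw [e2, e1, if_pos h]
        push_cast
        omega
      · have hna : w n ≠ a := by rw [h]; exact Ne.symm hab
        have e2 : List.count a [w n] = 0 := by simp [List.count_cons, hna]
        rw [e2, e1, if_neg hna]
        push_cast
        omega
  have hcb : ∀ n, 2 * ((pref w n).count b : ℤ) = n - ∑ i ∈ Finset.range n, ε (w i) := by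
    intro n
    induction n with
    | zero => simp [pref]
    | succ n ih =>
      have hp : pref w (n + 1) = pref w n ++ [w n] := by
        simp [pref, List.range_succ]
      rw [hp, List.count_append, Finset.sum_range_succ]
      have e1 : ε (w n) = if w n = a then 1 else -1 := by simp only [hε]
      rcases hw n with h | h
      · have hnb : w n ≠ b := by rw [h]; exact hab
        have e2 : List.count b [w n] = 0 := by simp [List.count_cons, hnb]
        rw [e2, e1, if_pos h]
        push_cast
        omega
      · have hna : w n ≠ a := by rw [h]; exact Ne.symm hab
        have e2 : List.count b [w n] = 1 := by simp [List.count_cons, h]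
        rw [e2, e1, if_neg hna]
        push_cast
        omega
  -- the real bounds
  have hbnda : ∀ n : ℕ, |2 * (((pref w n).count a : ℝ)) - n| ≤ 2 * M := by
    intro n
    have h := hca n
    have : |2 * ((pref w n).count a : ℤ) - n| ≤ 2 * M := by
      have heq2 : 2 * ((pref w n).count a : ℤ) - n = ∑ i ∈ Finset.range n, ε (w i) := by omega
      rw [heq2]; exact hS n
    calc |2 * (((pref w n).count a : ℝ)) - n|
        = |((2 * ((pref w n).count a : ℤ) - n : ℤ) : ℝ)| := by push_cast; ring_nf
      _ ≤ ((2 * M : ℤ) : ℝ) := by rw [Int.cast_abs.symm]; exact_mod_cast this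
      _ = 2 * M := by push_cast; ring
  have hbndb : ∀ n : ℕ, |2 * (((pref w n).count b : ℝ)) - n| ≤ 2 * M := by
    intro n
    have h := hcb n
    have : |2 * ((pref w n).count b : ℤ) - n| ≤ 2 * M := by
      have heq2 : 2 * ((pref w n).count b : ℤ) - n = -∑ i ∈ Finset.range n, ε (w i) := by omega
      rw [heq2, abs_neg]; exact hS n
    calc |2 * (((pref w n).count b : ℝ)) - n|
        = |((2 * ((pref w n).count b : ℤ) - n : ℤ) : ℝ)| := by push_cast; ring_nf
      _ ≤ ((2 * M : ℤ) : ℝ) := by rw [Int.cast_abs.symm]; exact_mod_cast this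
      _ = 2 * M := by push_cast; ring
  exact ⟨tendsto_half _ (2 * M) hbnda, tendsto_half _ (2 * M) hbndb⟩
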